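/- Let N be a positive integer, ξ > 0, and for k ∈ ℤ^N let H_k := ∏_{i=1}^N [2πk_i/ξ, 2π(k_i+1)/ξ] ⊆ ℝ^N. For 1 ≤ i ≤ N let f_i : ℝ → ℂ be measurable, 2π-periodic, with |f_i(t)| ≤ 1 for all t. Let g : ℝ^N → ℝ be a continuously differentiable probability density (g ≥ 0 and ∫_{ℝ^N} g = 1) such that the families (sup_{x∈H_k} ‖∇g(x)‖)_{k∈ℤ^N} and (g(2πk/ξ))_{k∈ℤ^N} are summable. Then for every y ∈ ℝ^N: |∫_{ℝ^N} (∏_{i=1}^N f_i(ξ(x_i + y_i))) g(x) dx − ∏_{i=1}^N (1/(2π)) ∫_0^{2π} f_i(t) dt| ≤ 4π (√N/ξ) Σ_{k∈ℤ^N} (2π/ξ)^N sup_{x∈H_k} ‖∇g(x)‖. -/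

import Mathlib

open MeasureTheory Filter Real

/-- The cube `H_k = ∏_i [2πk_i/ξ, 2π(k_i+1)/ξ]` in `ℝ^N`. -/
def cube (N : ℕ) (ξ : ℝ) (k : Fin N → ℤ) : Set (EuclideanSpace ℝ (Fin N)) :=
  {x | ∀ i, x i ∈ Set.Icc (2 * π * (k i : ℝ) / ξ) (2 * π * ((k i : ℝ) + 1) / ξ)}

/- ### Auxiliary lemmas -/

lemma stmt6_oneD (ξ : ℝ) (hξ : 0 < ξ) {f : ℝ → ℂ} (hfper : Function.Periodic f (2*π))
    (a b : ℝ) :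
    ∫ t in Set.Ico a (a + 2*π/ξ), f (ξ * (t + b)) = (ξ : ℂ)⁻¹ * ∫ t in (0:ℝ)..(2*π), f t := by
  have hT : 0 < 2*π/ξ := by positivity
  rw [MeasureTheory.setIntegral_congr_set MeasureTheory.Ico_ae_eq_Ioc,
    ← intervalIntegral.integral_of_le (by linarith)]
  have h1 : ∀ t : ℝ, ξ * (t + b) = ξ * t + ξ * b := fun t => by ring
  simp_rw [h1]
  rw [intervalIntegral.integral_comp_mul_add f hξ.ne' (ξ*b)]
  have h2 : ξ * (a + 2*π/ξ) + ξ*b = (ξ * a + ξ*b) + 2*π := by field_simp; ring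
  rw [h2, hfper.intervalIntegral_add_eq (ξ*a + ξ*b) 0, zero_add]
  rw [Complex.real_smul]
  push_cast
  ring

lemma stmt6_cubeInt (N : ℕ) (s : Fin N → Set ℝ) (hs : ∀ i, MeasurableSet (s i))
    (h : Fin N → ℝ → ℂ) :
    ∫ z in Set.univ.pi s, (∏ i, h i (z i)) = ∏ i, ∫ t in s i, h i t := by
  rw [← MeasureTheory.integral_indicator (MeasurableSet.univ_pi hs)]
  have heq : Set.indicator (Set.univ.pi s) (fun z => ∏ i, h i (z i))
      = fun z => ∏ i, Set.indicator (s i) (h i) (z i) := by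
    funext z
    by_cases hz : z ∈ Set.univ.pi s
    · rw [Set.indicator_of_mem hz]
      exact Finset.prod_congr rfl fun i _ => (Set.indicator_of_mem (hz i (Set.mem_univ i)) _).symm
    · rw [Set.indicator_of_notMem hz]
      rw [Set.mem_univ_pi] at hz
      push_neg at hz
      obtain ⟨i, hi⟩ := hz
      exact (Finset.prod_eq_zero (Finset.mem_univ i) (Set.indicator_of_notMem hi _)).symm
  rw [heq, MeasureTheory.volume_pi, MeasureTheory.integral_fintype_prod_eq_prod (ι := Fin N)
    (f := fun i => Set.indicator (s i) (h i))]
  exact Finset.prod_congr rfl fun i _ => MeasureTheory.integral_indicator (hs i)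

lemma stmt6_cube_compact (N : ℕ) (ξ : ℝ) (k : Fin N → ℤ) : IsCompact (cube N ξ k) := by
  have heq : cube N ξ k = (⇑(PiLp.continuousLinearEquiv 2 ℝ (fun _ : Fin N => ℝ))) ⁻¹'
      (Set.univ.pi fun i => Set.Icc (2*π*(k i:ℝ)/ξ) (2*π*((k i:ℝ)+1)/ξ)) := by
    ext x
    simp only [cube, Set.mem_setOf_eq, Set.mem_preimage, Set.mem_univ_pi]
    exact Iff.rfl
  rw [heq]
  exact (PiLp.continuousLinearEquiv 2 ℝ (fun _ : Fin N => ℝ)).toHomeomorph.isCompact_preimage.2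
    (isCompact_univ_pi fun i => isCompact_Icc)

lemma stmt6_cube_convex (N : ℕ) (ξ : ℝ) (k : Fin N → ℤ) : Convex ℝ (cube N ξ k) := by
  intro x hx x' hx' a b ha hb hab i
  have h : (a • x + b • x') i = a • x i + b • x' i := rfl
  rw [h]
  exact convex_Icc _ _ (hx i) (hx' i) ha hb hab

lemma stmt6_grad_cont {N : ℕ} {g : EuclideanSpace ℝ (Fin N) → ℝ} (hg : ContDiff ℝ 1 g) :
    Continuous (gradient g) := by
  have h1 : Continuous (fderiv ℝ g) := hg.continuous_fderiv one_ne_zero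
  have h2 : Continuous fun x =>
      (InnerProductSpace.toDual ℝ (EuclideanSpace ℝ (Fin N))).symm (fderiv ℝ g x) :=
    (InnerProductSpace.toDual ℝ (EuclideanSpace ℝ (Fin N))).symm.continuous.comp h1
  exact h2

lemma stmt6_grad_norm {N : ℕ} (g : EuclideanSpace ℝ (Fin N) → ℝ) (x : EuclideanSpace ℝ (Fin N)) :
    ‖gradient g x‖ = ‖fderiv ℝ g x‖ := by
  simp [gradient]

lemma stmt6_le_sup {N : ℕ} {ξ : ℝ} {g : EuclideanSpace ℝ (Fin N) → ℝ} (hg : ContDiff ℝ 1 g)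
    (k : Fin N → ℤ) {x : EuclideanSpace ℝ (Fin N)} (hx : x ∈ cube N ξ k) :
    ‖gradient g x‖ ≤ ⨆ x ∈ cube N ξ k, ‖gradient g x‖ := by
  obtain ⟨M, hM⟩ := ((stmt6_cube_compact N ξ k).image
    (continuous_norm.comp (stmt6_grad_cont hg))).bddAbove
  have hb : BddAbove (Set.range fun x => ⨆ _ : x ∈ cube N ξ k, ‖gradient g x‖) := by
    refine ⟨max M 0, ?_⟩
    rintro v ⟨x', rfl⟩
    show (⨆ _ : x' ∈ cube N ξ k, ‖gradient g x'‖) ≤ max M 0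
    by_cases h : x' ∈ cube N ξ k
    · rw [ciSup_pos (f := fun _ => ‖gradient g x'‖) h]
      exact le_max_of_le_left (hM ⟨x', h, rfl⟩)
    · haveI : IsEmpty (x' ∈ cube N ξ k) := ⟨h⟩
      rw [Real.iSup_of_isEmpty]
      exact le_max_right _ _
  calc ‖gradient g x‖ = ⨆ _ : x ∈ cube N ξ k, ‖gradient g x‖ :=
        (ciSup_pos (f := fun _ => ‖gradient g x‖) hx).symm
    _ ≤ _ := le_ciSup hb x

lemma stmt6_corner_mem (N : ℕ) {ξ : ℝ} (hξ : 0 < ξ) (k : Fin N → ℤ) :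
    (EuclideanSpace.equiv (Fin N) ℝ).symm (fun i => 2 * π * (k i : ℝ) / ξ) ∈ cube N ξ k := by
  intro i
  refine ⟨le_of_eq rfl, ?_⟩
  exact (div_le_div_iff_of_pos_right hξ).2 (by nlinarith [Real.pi_pos])

lemma stmt6_sup_nonneg {N : ℕ} {ξ : ℝ} (hξ : 0 < ξ) {g : EuclideanSpace ℝ (Fin N) → ℝ}
    (hg : ContDiff ℝ 1 g) (k : Fin N → ℤ) :
    0 ≤ ⨆ x ∈ cube N ξ k, ‖gradient g x‖ :=
  le_trans (norm_nonneg _) (stmt6_le_sup hg k (stmt6_corner_mem N hξ k))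

lemma stmt6_dist_le {N : ℕ} {ξ : ℝ} (hξ : 0 < ξ) {k : Fin N → ℤ}
    {x x' : EuclideanSpace ℝ (Fin N)} (hx : x ∈ cube N ξ k) (hx' : x' ∈ cube N ξ k) :
    ‖x - x'‖ ≤ Real.sqrt N * (2 * π / ξ) := by
  rw [EuclideanSpace.norm_eq]
  have key : ∀ i, ‖(x - x') i‖ ^ 2 ≤ (2*π/ξ)^2 := by
    intro i
    have h0 : (x - x') i = x i - x' i := rfl
    have h2 : |x i - x' i| ≤ 2*π/ξ := by
      have h3 := Real.dist_le_of_mem_Icc (hx i) (hx' i)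
      rw [Real.dist_eq] at h3
      calc |x i - x' i| ≤ 2*π*((k i:ℝ)+1)/ξ - 2*π*(k i:ℝ)/ξ := h3
        _ = 2*π/ξ := by ring
    rw [h0, Real.norm_eq_abs]
    have h4 : (0:ℝ) ≤ 2*π/ξ := by positivity
    nlinarith [abs_nonneg (x i - x' i)]
  calc Real.sqrt (∑ i, ‖(x - x') i‖ ^ 2) ≤ Real.sqrt (∑ _i : Fin N, (2*π/ξ)^2) :=
        Real.sqrt_le_sqrt (Finset.sum_le_sum fun i _ => key i)
    _ = Real.sqrt ((N : ℝ) * (2*π/ξ)^2) := by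
        rw [Finset.sum_const, Finset.card_univ, Fintype.card_fin, nsmul_eq_mul]
    _ = Real.sqrt N * (2*π/ξ) := by
        rw [Real.sqrt_mul (by positivity), Real.sqrt_sq (by positivity)]

lemma stmt6_lip {N : ℕ} {ξ : ℝ} (hξ : 0 < ξ) {g : EuclideanSpace ℝ (Fin N) → ℝ}
    (hg : ContDiff ℝ 1 g) {k : Fin N → ℤ} {x x' : EuclideanSpace ℝ (Fin N)}
    (hx : x ∈ cube N ξ k) (hx' : x' ∈ cube N ξ k) :
    ‖g x - g x'‖ ≤ (⨆ x ∈ cube N ξ k, ‖gradient g x‖) * (Real.sqrt N * (2 * π / ξ)) := by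
  have hder : ∀ z ∈ cube N ξ k, DifferentiableAt ℝ g z :=
    fun z _ => (hg.differentiable one_ne_zero) z
  have hbound : ∀ z ∈ cube N ξ k, ‖fderiv ℝ g z‖ ≤ ⨆ x ∈ cube N ξ k, ‖gradient g x‖ :=
    fun z hz => (stmt6_grad_norm g z) ▸ stmt6_le_sup hg k hz
  calc ‖g x - g x'‖ ≤ (⨆ x ∈ cube N ξ k, ‖gradient g x‖) * ‖x - x'‖ :=
        (stmt6_cube_convex N ξ k).norm_image_sub_le_of_norm_fderiv_le hder hbound hx' hx
    _ ≤ _ := mul_le_mul_of_nonneg_left (stmt6_dist_le hξ hx hx') (stmt6_sup_nonneg hξ hg k)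

lemma stmt6_floor_eq {T : ℝ} (hT : 0 < T) {m : ℤ} {u : ℝ}
    (hu : u ∈ Set.Ico (T * m) (T * m + T)) : ⌊u / T⌋ = m := by
  rw [Int.floor_eq_iff]
  constructor
  · rw [le_div_iff₀ hT]; linarith [hu.1]
  · rw [div_lt_iff₀ hT]; linarith [hu.2]

lemma stmt6_disjoint (N : ℕ) {T : ℝ} (hT : 0 < T) :
    Pairwise (Function.onFun Disjoint fun k : Fin N → ℤ =>
      Set.univ.pi fun i => Set.Ico (T * k i) (T * k i + T)) := by
  intro k k' hkk'
  refine Set.disjoint_left.2 fun z hz hz' => ?_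
  apply hkk'
  funext i
  rw [← stmt6_floor_eq hT (hz i (Set.mem_univ i)), stmt6_floor_eq hT (hz' i (Set.mem_univ i))]

lemma stmt6_union (N : ℕ) {T : ℝ} (hT : 0 < T) :
    (⋃ k : Fin N → ℤ, Set.univ.pi fun i => Set.Ico (T * k i) (T * k i + T)) = Set.univ := by
  ext z
  simp only [Set.mem_iUnion, Set.mem_univ, iff_true]
  refine ⟨fun i => ⌊z i / T⌋, fun i _ => ⟨?_, ?_⟩⟩
  · calc T * ⌊z i / T⌋ ≤ T * (z i / T) :=
        mul_le_mul_of_nonneg_left (Int.floor_le _) hT.le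
      _ = z i := by field_simp
  · have h := Int.lt_floor_add_one (z i / T)
    calc z i = T * (z i / T) := by field_simp
      _ < T * (⌊z i / T⌋ + 1) := mul_lt_mul_of_pos_left h hT
      _ = T * ⌊z i / T⌋ + T := by ring

lemma stmt6_volume (N : ℕ) {T : ℝ} (hT : 0 ≤ T) (k : Fin N → ℤ) :
    volume (Set.univ.pi fun i : Fin N => Set.Ico (T * k i) (T * k i + T))
      = ENNReal.ofReal T ^ N := by
  rw [volume_pi_pi]
  simp only [Real.volume_Ico, add_sub_cancel_left]
  rw [Finset.prod_const, Finset.card_univ, Fintype.card_fin]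

/- ### Main theorem -/

theorem stmt_6 (N : ℕ) (hN : 0 < N) (ξ : ℝ) (hξ : 0 < ξ)
    (f : Fin N → ℝ → ℂ) (hfm : ∀ i, Measurable (f i))
    (hfper : ∀ i, Function.Periodic (f i) (2 * π))
    (hfbd : ∀ i t, ‖f i t‖ ≤ 1)
    (g : EuclideanSpace ℝ (Fin N) → ℝ) (hg : ContDiff ℝ 1 g)
    (hg0 : ∀ x, 0 ≤ g x) (hgint : Integrable g) (hg1 : ∫ x, g x = 1)
    (hsum1 : Summable (fun k : Fin N → ℤ => ⨆ x ∈ cube N ξ k, ‖gradient g x‖))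
    (hsum2 : Summable (fun k : Fin N → ℤ =>
      g ((EuclideanSpace.equiv (Fin N) ℝ).symm (fun i => 2 * π * (k i : ℝ) / ξ)))) :
    ∀ y : EuclideanSpace ℝ (Fin N),
      ‖(∫ x : EuclideanSpace ℝ (Fin N), (∏ i, f i (ξ * (x i + y i))) * (g x : ℂ))
          - ∏ i, (1 / (2 * π) : ℂ) * ∫ t in (0 : ℝ)..(2 * π), f i t‖
        ≤ 4 * π * (Real.sqrt N / ξ) *
            ∑' k : Fin N → ℤ, (2 * π / ξ) ^ N * ⨆ x ∈ cube N ξ k, ‖gradient g x‖ := by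
  intro y
  have hπ := Real.pi_pos
  set T : ℝ := 2 * π / ξ with hTdef
  have hT : 0 < T := by positivity
  set e := (MeasurableEquiv.toLp 2 (Fin N → ℝ)).symm with he
  have mp := EuclideanSpace.volume_preserving_symm_measurableEquiv_toLp (Fin N)
  set C : ℂ := ∏ i, (1 / (2 * π) : ℂ) * ∫ t in (0:ℝ)..(2*π), f i t with hCdef
  set S : (Fin N → ℤ) → Set (Fin N → ℝ) :=
    fun k => Set.univ.pi fun i => Set.Ico (T * k i) (T * k i + T) with hSdef
  set L : (Fin N → ℤ) → ℝ := fun k => ⨆ x ∈ cube N ξ k, ‖gradient g x‖ with hLdef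
  set D : ℝ := Real.sqrt N * T with hDdef
  set Φ : (Fin N → ℝ) → ℂ := fun z => ∏ i, f i (ξ * (z i + y i)) with hΦdef
  set G : (Fin N → ℝ) → ℝ := fun z => g (e.symm z) with hGdef
  -- basic facts
  have hSsub : ∀ k, ∀ z ∈ S k, e.symm z ∈ cube N ξ k := by
    intro k z hz i
    have h := hz i (Set.mem_univ i)
    have hco : (e.symm z) i = z i := rfl
    rw [hco]
    have hl : 2 * π * (k i : ℝ) / ξ = T * k i := by rw [hTdef]; ring
    have hr : 2 * π * ((k i : ℝ) + 1) / ξ = T * k i + T := by rw [hTdef]; ring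
    exact ⟨hl ▸ h.1, hr ▸ h.2.le⟩
  have hΦm : Measurable Φ := by
    apply Finset.measurable_prod
    intro i _
    exact (hfm i).comp (by fun_prop)
  have hΦbd : ∀ z, ‖Φ z‖ ≤ 1 := by
    intro z
    calc ‖Φ z‖ = ∏ i, ‖f i (ξ*(z i + y i))‖ := norm_prod _ _
      _ ≤ ∏ _i : Fin N, 1 :=
        Finset.prod_le_prod (fun i _ => norm_nonneg _) (fun i _ => hfbd i _)
      _ = 1 := Finset.prod_const_one
  have hCbd : ‖C‖ ≤ 1 := by
    have hci : ∀ i : Fin N, ‖(1 / (2 * π) : ℂ) * ∫ t in (0:ℝ)..(2*π), f i t‖ ≤ 1 := by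
      intro i
      rw [norm_mul]
      have h1 : ‖(1 / (2 * π) : ℂ)‖ = 1/(2*π) := by
        have hc : (1 / (2 * π) : ℂ) = ((1/(2*π) : ℝ) : ℂ) := by push_cast; ring
        rw [hc, Complex.norm_real, Real.norm_eq_abs, abs_of_pos (by positivity)]
      have h2 : ‖∫ t in (0:ℝ)..(2*π), f i t‖ ≤ 1 * |2*π - 0| :=
        intervalIntegral.norm_integral_le_of_norm_le_const (fun t _ => hfbd i t)
      rw [h1]
      have h3 : (1:ℝ) * |2*π - 0| = 2*π := by
        rw [one_mul, sub_zero, abs_of_pos (by positivity)]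
      calc (1/(2*π)) * ‖∫ t in (0:ℝ)..(2*π), f i t‖ ≤ (1/(2*π)) * (2*π) := by
            rw [h3] at h2
            exact mul_le_mul_of_nonneg_left h2 (by positivity)
        _ = 1 := by field_simp
    calc ‖C‖ = ∏ i, ‖(1 / (2 * π) : ℂ) * ∫ t in (0:ℝ)..(2*π), f i t‖ := norm_prod _ _
      _ ≤ ∏ _i : Fin N, 1 := Finset.prod_le_prod (fun i _ => norm_nonneg _) (fun i _ => hci i)
      _ = 1 := Finset.prod_const_one
  have hΦC : ∀ z, ‖Φ z - C‖ ≤ 2 := fun z =>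
    (norm_sub_le _ _).trans (by linarith [hΦbd z, hCbd])
  -- integrability
  have hGint : Integrable G :=
    ((MeasurePreserving.symm _ mp).integrable_comp_emb e.symm.measurableEmbedding).2 hgint
  have hmain_int : Integrable (fun z => (Φ z - C) * (G z : ℂ)) :=
    Integrable.bdd_mul hGint.ofReal ((hΦm.sub measurable_const).aestronglyMeasurable)
      (c := 2) (Filter.Eventually.of_forall hΦC)
  -- measure facts
  have hSm : ∀ k, MeasurableSet (S k) := fun k => MeasurableSet.univ_pi fun i => measurableSet_Ico
  have hSvol : ∀ k, volume (S k) = ENNReal.ofReal T ^ N := fun k => stmt6_volume N hT.le k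
  have hSlt : ∀ k, volume (S k) < ⊤ := fun k => by
    rw [hSvol k]; exact ENNReal.pow_lt_top ENNReal.ofReal_lt_top
  have hSreal : ∀ k, (volume (S k)).toReal = T ^ N := fun k => by
    rw [hSvol k, ENNReal.toReal_pow, ENNReal.toReal_ofReal hT.le]
  -- integral of Φ over a cube
  have hΦcube : ∀ k, ∫ z in S k, Φ z = C * ((T:ℝ):ℂ)^N := by
    intro k
    rw [show (∫ z in S k, Φ z) = ∫ z in Set.univ.pi fun i => Set.Ico (T * k i) (T * k i + T),
      ∏ i, f i (ξ * (z i + y i)) from rfl]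
    rw [stmt6_cubeInt N _ (fun i => measurableSet_Ico) (fun i t => f i (ξ*(t + y i)))]
    have h1 : ∀ i : Fin N, (∫ t in Set.Ico (T*k i) (T*k i + T), f i (ξ*(t+y i)))
        = (ξ:ℂ)⁻¹ * ∫ t in (0:ℝ)..(2*π), f i t := by
      intro i
      have hTrw : T * k i + T = T * k i + 2*π/ξ := by rw [hTdef]
      rw [hTrw]
      exact stmt6_oneD ξ hξ (hfper i) (T * (k i)) (y i)
    rw [Finset.prod_congr rfl (fun i _ => h1 i), Finset.prod_mul_distrib, Finset.prod_const,
      Finset.card_univ, Fintype.card_fin, hCdef, Finset.prod_mul_distrib, Finset.prod_const,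
      Finset.card_univ, Fintype.card_fin]
    have hTC : ((T:ℝ):ℂ) = 2*(π:ℂ)/(ξ:ℂ) := by rw [hTdef]; push_cast; ring
    have hπC : (π:ℂ) ≠ 0 := Complex.ofReal_ne_zero.2 Real.pi_ne_zero
    have hξC : (ξ:ℂ) ≠ 0 := Complex.ofReal_ne_zero.2 hξ.ne'
    have hfrac : (1 / (2 * (π:ℂ))) * (2 * (π:ℂ) / (ξ:ℂ)) = ((ξ:ℂ))⁻¹ := by field_simp
    have hpow : ((1 / (2 * (π:ℂ))) ^ N) * ((2 * (π:ℂ) / (ξ:ℂ)) ^ N) = ((ξ:ℂ)⁻¹) ^ N := by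
      rw [← mul_pow, hfrac]
    rw [hTC, ← hpow]
    ring
  -- integral of Φ - C over a cube vanishes
  have hΦCint : ∀ k, IntegrableOn (fun z => Φ z - C) (S k) := by
    intro k
    refine Integrable.mono' (g := fun _ => (2:ℝ))
      (integrableOn_const (hSlt k).ne)
      ((hΦm.sub measurable_const).aestronglyMeasurable.restrict) ?_
    exact Filter.Eventually.of_forall fun z => hΦC z
  have hΦint : ∀ k, IntegrableOn Φ (S k) := by
    intro k
    refine Integrable.mono' (g := fun _ => (1:ℝ))
      (integrableOn_const (hSlt k).ne) (hΦm.aestronglyMeasurable.restrict) ?_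
    exact Filter.Eventually.of_forall fun z => hΦbd z
  have hΦCzero : ∀ k, ∫ z in S k, (Φ z - C) = 0 := by
    intro k
    rw [integral_sub (hΦint k) (integrableOn_const (hSlt k).ne)]
    rw [hΦcube k, setIntegral_const, measureReal_def, hSreal k, Complex.real_smul]
    push_cast
    ring
  -- decomposition on each cube
  have hdecomp : ∀ k, (∫ z in S k, (Φ z - C) * (G z:ℂ)) =
      ∫ z in S k, (Φ z - C) * ((G z:ℂ) - (G (fun i => T * k i):ℂ)) := by
    intro k
    have h1 : IntegrableOn (fun z => (Φ z - C) * (G z:ℂ)) (S k) := hmain_int.integrableOn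
    have h3 : IntegrableOn (fun z => (Φ z - C) * (G (fun i => T*k i):ℂ)) (S k) :=
      (hΦCint k).mul_const _
    have hexp : ∀ z, (Φ z - C) * ((G z:ℂ) - (G (fun i => T*k i):ℂ))
        = (Φ z - C) * (G z:ℂ) - (Φ z - C) * (G (fun i => T*k i):ℂ) := fun z => by ring
    rw [eq_comm]
    calc (∫ z in S k, (Φ z - C) * ((G z:ℂ) - (G (fun i => T*k i):ℂ)))
        = ∫ z in S k, ((Φ z - C) * (G z:ℂ) - (Φ z - C) * (G (fun i => T*k i):ℂ)) := by
          simp_rw [hexp]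
      _ = (∫ z in S k, (Φ z - C) * (G z:ℂ))
          - ∫ z in S k, (Φ z - C) * (G (fun i => T*k i):ℂ) := integral_sub h1 h3
      _ = ∫ z in S k, (Φ z - C) * (G z:ℂ) := by
          rw [integral_mul_const, hΦCzero k, zero_mul, sub_zero]
  -- per-cube estimate
  have hest : ∀ k, ‖∫ z in S k, (Φ z - C) * (G z:ℂ)‖ ≤ 2 * D * L k * T^N := by
    intro k
    rw [hdecomp k]
    have hcorner : (fun i => T * k i) ∈ S k := by
      intro i _
      simp only [Set.mem_Ico]
      exact ⟨le_refl _, by linarith⟩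
    have hb : ∀ z ∈ S k, ‖(Φ z - C) * ((G z:ℂ) - (G (fun i => T*k i):ℂ))‖ ≤ 2 * (L k * D) := by
      intro z hz
      rw [norm_mul]
      have h2 : ‖(G z:ℂ) - (G (fun i => T*k i):ℂ)‖ ≤ L k * D := by
        have hcast : ((G z:ℂ) - (G (fun i=>T*k i):ℂ)) = ((G z - G (fun i=>T*k i) : ℝ):ℂ) := by
          push_cast; ring
        rw [hcast, Complex.norm_real]
        have hz1 : e.symm z ∈ cube N ξ k := hSsub k z hz
        have hz2 : e.symm (fun i => T * k i) ∈ cube N ξ k := hSsub k _ hcorner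
        have hl := stmt6_lip hξ hg hz1 hz2
        rw [← hTdef] at hl
        calc ‖G z - G (fun i=>T*k i)‖ ≤ L k * (Real.sqrt N * T) := hl
          _ = L k * D := by rw [hDdef]
      exact mul_le_mul (hΦC z) h2 (norm_nonneg _) (by norm_num)
    calc ‖∫ z in S k, (Φ z - C) * ((G z:ℂ) - (G (fun i => T*k i):ℂ))‖
        ≤ (2 * (L k * D)) * (volume (S k)).toReal :=
          norm_setIntegral_le_of_norm_le_const (hSlt k) hb
      _ = 2 * D * L k * T^N := by rw [hSreal k]; ring
  -- splitting the whole integral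
  have hsplit : (∫ z, (Φ z - C) * (G z:ℂ)) = ∑' k, ∫ z in S k, (Φ z - C) * (G z:ℂ) := by
    rw [← MeasureTheory.setIntegral_univ, ← stmt6_union N hT]
    exact integral_iUnion hSm (stmt6_disjoint N hT)
      (hmain_int.integrableOn)
  -- transfer from EuclideanSpace to the pi space
  have htransfer : (∫ x : EuclideanSpace ℝ (Fin N), ((∏ i, f i (ξ * (x i + y i))) - C) * (g x:ℂ))
      = ∫ z, (Φ z - C) * (G z:ℂ) := by
    have h := (MeasurePreserving.symm _ mp).integral_comp'
      (f := e.symm) (fun x => ((∏ i, f i (ξ * (x i + y i))) - C) * (g x:ℂ))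
    rw [← h]
    rfl
  -- the left-hand side rearrangement
  have hFmE : Measurable fun x : EuclideanSpace ℝ (Fin N) => ∏ i, f i (ξ * (x i + y i)) := by
    apply Finset.measurable_prod
    intro i _
    have hco : Continuous fun x : EuclideanSpace ℝ (Fin N) => x i :=
      (continuous_apply i).comp
        (PiLp.continuousLinearEquiv 2 ℝ (fun _ : Fin N => ℝ)).continuous
    exact (hfm i).comp ((hco.measurable.add_const (y i)).const_mul ξ)
  have hFbdE : ∀ x : EuclideanSpace ℝ (Fin N), ‖∏ i, f i (ξ * (x i + y i))‖ ≤ 1 := by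
    intro x
    calc ‖∏ i, f i (ξ*(x i + y i))‖ = ∏ i, ‖f i (ξ*(x i + y i))‖ := norm_prod _ _
      _ ≤ ∏ _i : Fin N, 1 :=
        Finset.prod_le_prod (fun i _ => norm_nonneg _) (fun i _ => hfbd i _)
      _ = 1 := Finset.prod_const_one
  have hFgE : Integrable (fun x : EuclideanSpace ℝ (Fin N) =>
      (∏ i, f i (ξ * (x i + y i))) * (g x:ℂ)) :=
    Integrable.bdd_mul hgint.ofReal hFmE.aestronglyMeasurable (c := 1) (Filter.Eventually.of_forall hFbdE)
  have hgE : (∫ x : EuclideanSpace ℝ (Fin N), (g x : ℂ)) = 1 := by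
    exact integral_ofReal.trans (by rw [hg1]; norm_num)
  have hlhs : (∫ x : EuclideanSpace ℝ (Fin N), (∏ i, f i (ξ*(x i+y i))) * (g x:ℂ)) - C
      = ∫ x : EuclideanSpace ℝ (Fin N), ((∏ i, f i (ξ*(x i+y i))) - C) * (g x:ℂ) := by
    have hexp : ∀ x : EuclideanSpace ℝ (Fin N),
        ((∏ i, f i (ξ*(x i+y i))) - C) * (g x:ℂ)
          = (∏ i, f i (ξ*(x i+y i))) * (g x:ℂ) - C * (g x:ℂ) := fun x => by ring
    rw [eq_comm]
    calc (∫ x : EuclideanSpace ℝ (Fin N), ((∏ i, f i (ξ*(x i+y i))) - C) * (g x:ℂ))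
        = ∫ x : EuclideanSpace ℝ (Fin N),
            ((∏ i, f i (ξ*(x i+y i))) * (g x:ℂ) - C * (g x:ℂ)) := by simp_rw [hexp]
      _ = (∫ x : EuclideanSpace ℝ (Fin N), (∏ i, f i (ξ*(x i+y i))) * (g x:ℂ))
            - ∫ x : EuclideanSpace ℝ (Fin N), C * (g x:ℂ) :=
          integral_sub hFgE (hgint.ofReal.const_mul C)
      _ = (∫ x : EuclideanSpace ℝ (Fin N), (∏ i, f i (ξ*(x i+y i))) * (g x:ℂ)) - C := by
          rw [integral_const_mul, hgE, mul_one]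
  -- summability of the bounds
  have hbnd_sum : Summable fun k => 2*D*L k*T^N := by
    have h := (hsum1.mul_left (2*D)).mul_right (T^N)
    exact h
  have hnorm_sum : Summable fun k => ‖∫ z in S k, (Φ z - C) * (G z:ℂ)‖ :=
    Summable.of_nonneg_of_le (fun k => norm_nonneg _) hest hbnd_sum
  -- final computation
  rw [hlhs, htransfer, hsplit]
  calc ‖∑' k, ∫ z in S k, (Φ z - C) * (G z:ℂ)‖
      ≤ ∑' k, ‖∫ z in S k, (Φ z - C) * (G z:ℂ)‖ := norm_tsum_le_tsum_norm hnorm_sum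
    _ ≤ ∑' k, 2*D*L k*T^N := Summable.tsum_le_tsum hest hnorm_sum hbnd_sum
    _ = ∑' k, (2*D) * (T^N * L k) := by
        apply tsum_congr
        intro k
        ring
    _ = (2*D) * ∑' k, T^N * L k := tsum_mul_left
    _ = 4 * π * (Real.sqrt N / ξ) * ∑' k, T^N * L k := by
        rw [hDdef, hTdef]
        congr 1
        ring
    _ = 4 * π * (Real.sqrt N / ξ) *
          ∑' k : Fin N → ℤ, (2 * π / ξ) ^ N * ⨆ x ∈ cube N ξ k, ‖gradient g x‖ := by
        rw [hLdef, hTdef]
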